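/- If D is a k-partially colored Gauss diagram obtained from an initial coloring of k seed strands by a sequence of coloring moves, then at every stage of the coloring process, the set of strands assigned any fixed color forms a connected union of strands (i.e., consecutive strands along a circle component). -/

import Mathlib

/-- An abstract Gauss diagram: a finite collection of circles, each circle `c`
carrying `heads c` arrowheads which divide it into `heads c` strands (in cyclic
order); each chord has its arrowhead at one of these positions (bijectively),
its arrowtail on some strand, and a sign. -/
structure GaussDiagram where
  circles : ℕ
  heads : Fin circles → ℕ
  chords : ℕ
  headPos : Fin chords → (c : Fin circles) × Fin (heads c)
  headBij : Function.Bijective headPos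
  tail : Fin chords → (c : Fin circles) × Fin (heads c)
  sign : Fin chords → Bool

namespace GaussDiagram

variable (D : GaussDiagram)

/-- A strand: the arc of circle `c` beginning just after arrowhead `i`. -/
abbrev Strand := (c : Fin D.circles) × Fin (D.heads c)

noncomputable def nStrands : ℕ := Nat.card D.Strand

/-- The next strand along the circle (across one arrowhead). -/
def next (s : D.Strand) : D.Strand :=
  ⟨s.1, ⟨(s.2.val + 1) % D.heads s.1, Nat.mod_lt _ (Nat.lt_of_le_of_lt (Nat.zero_le _) s.2.isLt)⟩⟩

/-- The strand on one side of the arrowhead of chord `p`. -/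
def src (p : Fin D.chords) : D.Strand := D.headPos p
/-- The strand on the other side of the arrowhead of chord `p`. -/
def dst (p : Fin D.chords) : D.Strand := D.next (D.src p)

/-- Two strands are adjacent if they are separated by an arrowhead. -/
def Adjacent (s t : D.Strand) : Prop :=
  ∃ p : Fin D.chords, (D.src p = s ∧ D.dst p = t) ∨ (D.src p = t ∧ D.dst p = s)

/-- An overbridge is a strand containing at least one arrowtail. -/
def IsOverbridge (s : D.Strand) : Prop := ∃ p : Fin D.chords, D.tail p = s

/-- The bridge number of the diagram: the number of overbridges. -/
noncomputable def vb : ℕ := Nat.card {s : D.Strand // D.IsOverbridge s}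

/-- Cut-split: some circle has no chords, or two strands adjacent at an
arrowhead coincide. -/
def CutSplit : Prop :=
  (∃ c : Fin D.circles, D.heads c = 0) ∨ ∃ p : Fin D.chords, D.src p = D.dst p

/-- A `k`-meridional coloring of `D`, recorded by its coloring sequence:
`seq` enumerates the strands in the order they are colored, the first `k` being
the seed strands (with the `k` distinct colors `0, …, k-1`), and each later
strand receives its color through a coloring move: there is a chord `p` whose
arrowhead separates it from a previously colored strand of the same color, and
whose arrowtail lies on a previously colored strand. -/
structure MerColoring (k : ℕ) where
  seq : Fin D.nStrands → D.Strand
  bij : Function.Bijective seq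
  col : Fin D.nStrands → Fin k
  seed_col : ∀ (i : Fin D.nStrands) (h : i.val < k), col i = ⟨i.val, h⟩
  move : ∀ i : Fin D.nStrands, k ≤ i.val →
    ∃ (p : Fin D.chords) (l r : Fin D.nStrands), l < i ∧ r < i ∧
      ((D.src p = seq l ∧ D.dst p = seq i) ∨ (D.src p = seq i ∧ D.dst p = seq l)) ∧
      D.tail p = seq r ∧ col i = col l

variable {D}

/-- The position of a strand in the coloring sequence. -/
noncomputable def MerColoring.idx {k : ℕ} (mc : D.MerColoring k) (s : D.Strand) :
    Fin D.nStrands :=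
  (Equiv.ofBijective mc.seq mc.bij).symm s

/-- The height function `h(α_j) = 1/(j+1)` (zero-indexed: `1/(j+2)`). -/
noncomputable def MerColoring.height {k : ℕ} (mc : D.MerColoring k) (s : D.Strand) : ℚ :=
  1 / ((mc.idx s : ℕ) + 2)

/-- The final color of a strand. -/
noncomputable def MerColoring.colorOf {k : ℕ} (mc : D.MerColoring k) (s : D.Strand) : Fin k :=
  mc.col (mc.idx s)

variable (D)

/-- The Wirtinger number: the least `k` for which `D` is `k`-meridionally
colorable. -/
noncomputable def wirt : ℕ := sInf {k | Nonempty (D.MerColoring k)}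

/-- A single coloring move on partial colorings: extend a color across the
arrowhead of a chord whose arrowtail lies on an already colored strand. -/
def ColoringMove {k : ℕ} (f g : D.Strand → Option (Fin k)) : Prop :=
  ∃ (p : Fin D.chords) (ap aq : D.Strand),
    ((D.src p = ap ∧ D.dst p = aq) ∨ (D.src p = aq ∧ D.dst p = ap)) ∧
    (f (D.tail p)).isSome ∧ (f ap).isSome ∧ f aq = none ∧
    g = Function.update f aq (f ap)

/-- A set of strands is connected if any two of its members are joined by a
path of adjacent strands inside the set. -/
def ConnectedStrands (A : Set D.Strand) : Prop :=
  ∀ s ∈ A, ∀ t ∈ A,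
    Relation.ReflTransGen (fun x y => x ∈ A ∧ y ∈ A ∧ D.Adjacent x y) s t

end GaussDiagram


open GaussDiagram in
lemma connected_insert (D : GaussDiagram) (A : Set D.Strand)
    (hA : D.ConnectedStrands A) (ap : D.Strand) (hap : ap ∈ A) (aq : D.Strand)
    (hadj : D.Adjacent ap aq) : D.ConnectedStrands (insert aq A) := by
  have mono : ∀ x y, Relation.ReflTransGen (fun x y => x ∈ A ∧ y ∈ A ∧ D.Adjacent x y) x y →
      Relation.ReflTransGen (fun x y => x ∈ insert aq A ∧ y ∈ insert aq A ∧ D.Adjacent x y) x y :=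
    fun x y h => Relation.ReflTransGen.mono (fun a b ⟨ha, hb, hadj'⟩ =>
      ⟨Set.mem_insert_of_mem _ ha, Set.mem_insert_of_mem _ hb, hadj'⟩) x y h
  have hadj' : D.Adjacent aq ap := by
    obtain ⟨p, hp⟩ := hadj
    exact ⟨p, hp.symm⟩
  intro s hs t ht
  rcases hs with hs | hs <;> rcases ht with ht | ht
  · subst hs; subst ht; exact Relation.ReflTransGen.refl
  · subst hs
    exact Relation.ReflTransGen.trans
      (Relation.ReflTransGen.single ⟨Set.mem_insert _ _, Set.mem_insert_of_mem _ hap, hadj'⟩)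
      (mono _ _ (hA ap hap t ht))
  · subst ht
    exact Relation.ReflTransGen.trans (mono _ _ (hA s hs ap hap))
      (Relation.ReflTransGen.single ⟨Set.mem_insert_of_mem _ hap, Set.mem_insert _ _, hadj⟩)
  · exact mono _ _ (hA s hs t ht)

open GaussDiagram in
/-- If a partial coloring assigning distinct colors to some strands is extended
by a sequence of coloring moves, then at every stage the set of strands
assigned any fixed color is a connected union of strands. -/
theorem color_classes_connected (D : GaussDiagram) (k : ℕ)
    (f : ℕ → D.Strand → Option (Fin k)) (m : ℕ)
    (hseed : ∀ μ : Fin k, {s : D.Strand | f 0 s = some μ}.Subsingleton)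
    (hmoves : ∀ j < m, D.ColoringMove (f j) (f (j + 1))) :
    ∀ j ≤ m, ∀ μ : Fin k, D.ConnectedStrands {s : D.Strand | f j s = some μ} := by
  intro j
  induction j with
  | zero =>
    intro _ μ s hs t ht
    have := hseed μ hs ht
    subst this
    exact Relation.ReflTransGen.refl
  | succ n ih =>
    intro hn μ
    have hlt : n < m := hn
    obtain ⟨p, ap, aq, hp, htail, hap, haq, hupd⟩ := hmoves n hlt
    have ihn := ih (le_of_lt hlt) μ
    obtain ⟨ν, hν⟩ := Option.isSome_iff_exists.mp hap
    have hadj : D.Adjacent ap aq := ⟨p, hp⟩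
    by_cases hc : ν = μ
    · subst hc
      have hset : {s : D.Strand | f (n + 1) s = some ν}
          = insert aq {s : D.Strand | f n s = some ν} := by
        ext s
        simp only [Set.mem_setOf_eq, Set.mem_insert_iff, hupd, Function.update_apply]
        by_cases hs : s = aq
        · simp [hs, hν]
        · simp [hs]
      rw [hset]
      have hapA : ap ∈ {s : D.Strand | f n s = some ν} := hν
      exact connected_insert D _ ihn ap hapA aq hadj
    · have hset : {s : D.Strand | f (n + 1) s = some μ}
          = {s : D.Strand | f n s = some μ} := by
        ext s
        simp only [Set.mem_setOf_eq, hupd, Function.update_apply]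
        by_cases hs : s = aq
        · subst hs
          simp [haq, hν, hc]
        · simp [hs]
      rw [hset]
      exact ihn
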